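/- Let G be a connected graph and let r ≥ 0 be the number of full vertices of G (vertices adjacent to all other vertices). If G admits an idomatic partition, then IC(G) ≥ 2·id(G) − r. -/

import Mathlib

namespace ICNL

variable {V : Type*}

/-- `S` is a dominating set of `G`. -/
def Dominating (G : SimpleGraph V) (S : Set V) : Prop :=
  ∀ v : V, v ∈ S ∨ ∃ u ∈ S, G.Adj u v

/-- `S` is an independent set of `G`. -/
def IndepSet (G : SimpleGraph V) (S : Set V) : Prop :=
  ∀ ⦃u : V⦄, u ∈ S → ∀ ⦃v : V⦄, v ∈ S → ¬ G.Adj u v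

/-- `S` is an independent dominating set of `G`. -/
def IndepDom (G : SimpleGraph V) (S : Set V) : Prop :=
  IndepSet G S ∧ Dominating G S

/-- `A` and `B` form an independent coalition in `G`. -/
def ICCoalition (G : SimpleGraph V) (A B : Set V) : Prop :=
  Disjoint A B ∧ IndepSet G A ∧ IndepSet G B ∧
    ¬ IndepDom G A ∧ ¬ IndepDom G B ∧ IndepDom G (A ∪ B)

/-- `π` is a partition of the vertex set into nonempty classes. -/
def IsPartition (π : Finset (Finset V)) : Prop :=
  (∀ A ∈ π, A.Nonempty) ∧ ∀ v : V, ∃! A : Finset V, A ∈ π ∧ v ∈ A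

/-- `π` is an independent coalition partition of `G`. -/
def IsICPartition (G : SimpleGraph V) (π : Finset (Finset V)) : Prop :=
  IsPartition π ∧
    ∀ A ∈ π, (∃ v : V, (A : Set V) = {v} ∧ Dominating G (A : Set V)) ∨
      (¬ IndepDom G (A : Set V) ∧
        ∃ B ∈ π, B ≠ A ∧ ICCoalition G (A : Set V) (B : Set V))

/-- The independent coalition number: the maximum number of classes of an
ic-partition of `G`. -/
noncomputable def IC (G : SimpleGraph V) : ℕ :=
  sSup {k | ∃ π : Finset (Finset V), IsICPartition G π ∧ π.card = k}


/-- `π` is an idomatic partition of `G`: a partition of the vertex set into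
independent dominating sets. -/
def IsIdomaticPartition (G : SimpleGraph V) (π : Finset (Finset V)) : Prop :=
  IsPartition π ∧ ∀ A ∈ π, IndepDom G (A : Set V)

/-- The idomatic number: the maximum number of classes of an idomatic partition of `G`. -/
noncomputable def idNum (G : SimpleGraph V) : ℕ :=
  sSup {k | ∃ π : Finset (Finset V), IsIdomaticPartition G π ∧ π.card = k}

section Aux

variable [DecidableEq V]

noncomputable def pk (A : Finset V) (h : A.Nonempty) : V := h.choose

lemma pk_mem (A : Finset V) (h : A.Nonempty) : pk A h ∈ A := h.choose_spec

noncomputable def split (A : Finset V) : Finset (Finset V) :=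
  if h : 2 ≤ A.card then
    {{pk A (Finset.card_pos.mp (by omega))}, A.erase (pk A (Finset.card_pos.mp (by omega)))}
  else {A}

lemma split_eq_of_small {A : Finset V} (h : ¬ 2 ≤ A.card) : split A = {A} := dif_neg h

lemma split_spec {A : Finset V} (h : 2 ≤ A.card) :
    ∃ a ∈ A, split A = {{a}, A.erase a} ∧ ({a} : Finset V) ≠ A.erase a := by
  rw [split, dif_pos h]
  refine ⟨pk A (Finset.card_pos.mp (by omega)), pk_mem _ _, rfl, ?_⟩
  intro hEq
  have := hEq ▸ Finset.mem_singleton_self (pk A (Finset.card_pos.mp (by omega)))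
  simp at this

lemma split_subset {A C : Finset V} (hC : C ∈ split A) : C ⊆ A := by
  by_cases h : 2 ≤ A.card
  · obtain ⟨a, ha, hs, _⟩ := split_spec h
    rw [hs, Finset.mem_insert, Finset.mem_singleton] at hC
    rcases hC with rfl | rfl
    · exact Finset.singleton_subset_iff.mpr ha
    · exact Finset.erase_subset _ _
  · rw [split_eq_of_small h, Finset.mem_singleton] at hC
    exact hC ▸ Finset.Subset.refl A

lemma split_nonempty {A C : Finset V} (hA : A.Nonempty) (hC : C ∈ split A) : C.Nonempty := by
  by_cases h : 2 ≤ A.card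
  · obtain ⟨a, ha, hs, _⟩ := split_spec h
    rw [hs, Finset.mem_insert, Finset.mem_singleton] at hC
    rcases hC with rfl | rfl
    · exact Finset.singleton_nonempty a
    · rw [← Finset.card_pos, Finset.card_erase_of_mem ha]; omega
  · rw [split_eq_of_small h, Finset.mem_singleton] at hC
    exact hC ▸ hA

lemma split_mem_unique {A C D : Finset V} {v : V} (hC : C ∈ split A) (hD : D ∈ split A)
    (hvC : v ∈ C) (hvD : v ∈ D) : C = D := by
  by_cases h : 2 ≤ A.card
  · obtain ⟨a, ha, hs, _⟩ := split_spec h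
    rw [hs, Finset.mem_insert, Finset.mem_singleton] at hC hD
    rcases hC with rfl | rfl <;> rcases hD with rfl | rfl
    · rfl
    · rw [Finset.mem_singleton] at hvC
      rw [Finset.mem_erase] at hvD
      exact absurd hvC hvD.1
    · rw [Finset.mem_singleton] at hvD
      rw [Finset.mem_erase] at hvC
      exact absurd hvD hvC.1
    · rfl
  · rw [split_eq_of_small h, Finset.mem_singleton] at hC hD
    rw [hC, hD]

lemma not_indepDom_ssub (G : SimpleGraph V) {A C : Set V} (hA : IndepDom G A)
    (hsub : C ⊆ A) (hne : C ≠ A) : ¬ IndepDom G C := by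
  rintro ⟨-, hdom⟩
  obtain ⟨x, hxA, hxC⟩ := Set.exists_of_ssubset (ssubset_of_subset_of_ne hsub hne)
  rcases hdom x with hx | ⟨u, huC, hadj⟩
  · exact hxC hx
  · exact hA.1 (hsub huC) hxA hadj

lemma indepSet_subset (G : SimpleGraph V) {A C : Set V} (hA : IndepSet G A) (h : C ⊆ A) :
    IndepSet G C := fun u hu v hv => hA (h hu) (h hv)

lemma key {V : Type*} [Fintype V] [DecidableEq V] (G : SimpleGraph V)
    {π : Finset (Finset V)} (hπ : IsIdomaticPartition G π) :
    ∃ π' : Finset (Finset V), IsICPartition G π' ∧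
      2 * π.card ≤ π'.card + (π.filter (fun A => A.card = 1)).card := by
  have hne : ∀ A ∈ π, A.Nonempty := hπ.1.1
  have huniq : ∀ v : V, ∃! A : Finset V, A ∈ π ∧ v ∈ A := hπ.1.2
  have hdisj : ∀ A ∈ π, ∀ B ∈ π, A ≠ B → Disjoint A B := by
    intro A hA B hB hAB
    rw [Finset.disjoint_left]
    intro x hxA hxB
    exact hAB ((huniq x).unique ⟨hA, hxA⟩ ⟨hB, hxB⟩)
  have hdisjsplit : ∀ A ∈ π, ∀ B ∈ π, A ≠ B → Disjoint (split A) (split B) := by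
    intro A hA B hB hAB
    rw [Finset.disjoint_left]
    intro C hCA hCB
    obtain ⟨x, hx⟩ := split_nonempty (hne A hA) hCA
    exact Finset.disjoint_left.mp (hdisj A hA B hB hAB) (split_subset hCA hx)
      (split_subset hCB hx)
  refine ⟨π.biUnion split, ⟨⟨?_, ?_⟩, ?_⟩, ?_⟩
  · -- nonempty classes
    intro C hC
    obtain ⟨A, hA, hCA⟩ := Finset.mem_biUnion.mp hC
    exact split_nonempty (hne A hA) hCA
  · -- exists unique
    intro v
    obtain ⟨A, ⟨hA, hvA⟩, hAu⟩ := huniq v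
    have hex : ∃ C ∈ split A, v ∈ C := by
      by_cases h2 : 2 ≤ A.card
      · obtain ⟨a, haA, hs, _⟩ := split_spec h2
        by_cases hva : v = a
        · exact ⟨{a}, by rw [hs]; simp, by simp [hva]⟩
        · exact ⟨A.erase a, by rw [hs]; simp, Finset.mem_erase.mpr ⟨hva, hvA⟩⟩
      · exact ⟨A, by rw [split_eq_of_small h2]; simp, hvA⟩
    obtain ⟨C, hCA, hvC⟩ := hex
    refine ⟨C, ⟨Finset.mem_biUnion.mpr ⟨A, hA, hCA⟩, hvC⟩, ?_⟩
    rintro D ⟨hD, hvD⟩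
    obtain ⟨B, hB, hDB⟩ := Finset.mem_biUnion.mp hD
    have hBA : B = A := hAu B ⟨hB, split_subset hDB hvD⟩
    subst hBA
    exact split_mem_unique hDB hCA hvD hvC
  · -- coalition condition
    intro C hC
    obtain ⟨A, hA, hCA⟩ := Finset.mem_biUnion.mp hC
    have hIDA : IndepDom G (A : Set V) := hπ.2 A hA
    by_cases h2 : 2 ≤ A.card
    · right
      obtain ⟨a, haA, hs, hneq⟩ := split_spec h2
      have hU : (({a} : Finset V) : Set V) ∪ ((A.erase a : Finset V) : Set V) = (A : Set V) := by
        rw [← Finset.coe_union, ← Finset.insert_eq, Finset.insert_erase haA]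
      have hne1 : ({a} : Finset V) ≠ A := by
        intro hEq; rw [← hEq] at h2; simp at h2
      have hne2 : A.erase a ≠ A := (Finset.erase_ne_self).mpr haA
      have hd : Disjoint (({a} : Finset V) : Set V) ((A.erase a : Finset V) : Set V) := by
        rw [Finset.disjoint_coe, Finset.disjoint_left]
        intro x hx
        rw [Finset.mem_singleton] at hx
        subst hx
        simp
      have hi1 : IndepSet G (({a} : Finset V) : Set V) :=
        indepSet_subset G hIDA.1 (by intro x hx; simp at hx; subst hx; exact haA)
      have hi2 : IndepSet G ((A.erase a : Finset V) : Set V) :=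
        indepSet_subset G hIDA.1 (Finset.coe_subset.mpr (Finset.erase_subset _ _))
      have hn1 : ¬ IndepDom G (({a} : Finset V) : Set V) :=
        not_indepDom_ssub G hIDA (Finset.coe_subset.mpr (Finset.singleton_subset_iff.mpr haA))
          (fun hEq => hne1 (Finset.coe_injective hEq))
      have hn2 : ¬ IndepDom G ((A.erase a : Finset V) : Set V) :=
        not_indepDom_ssub G hIDA (Finset.coe_subset.mpr (Finset.erase_subset _ _))
          (fun hEq => hne2 (Finset.coe_injective hEq))
      rw [hs, Finset.mem_insert, Finset.mem_singleton] at hCA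
      rcases hCA with rfl | rfl
      · refine ⟨hn1, A.erase a, Finset.mem_biUnion.mpr ⟨A, hA, by rw [hs]; simp⟩,
          hneq.symm, hd, hi1, hi2, hn1, hn2, ?_⟩
        rw [hU]; exact hIDA
      · refine ⟨hn2, {a}, Finset.mem_biUnion.mpr ⟨A, hA, by rw [hs]; simp⟩,
          hneq, hd.symm, hi2, hi1, hn2, hn1, ?_⟩
        rw [Set.union_comm, hU]; exact hIDA
    · left
      rw [split_eq_of_small h2, Finset.mem_singleton] at hCA
      subst hCA
      have h1 : C.card = 1 := by
        have := Finset.card_pos.mpr (hne C hA); omega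
      obtain ⟨v, hv⟩ := Finset.card_eq_one.mp h1
      exact ⟨v, by rw [hv]; simp, (hπ.2 C hA).2⟩
  · -- counting
    have hcb : (π.biUnion split).card = ∑ A ∈ π, (split A).card :=
      Finset.card_biUnion hdisjsplit
    have hcf : (π.filter (fun A => A.card = 1)).card
        = ∑ A ∈ π, if A.card = 1 then 1 else 0 := Finset.card_filter _ _
    have hper : ∀ A ∈ π, 2 ≤ (split A).card + (if A.card = 1 then 1 else 0) := by
      intro A hA
      by_cases h2 : 2 ≤ A.card
      · obtain ⟨a, haA, hs, hneq⟩ := split_spec h2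
        have : (split A).card = 2 := by
          rw [hs, Finset.card_insert_of_notMem (by simpa using hneq), Finset.card_singleton]
        omega
      · have h1 : A.card = 1 := by
          have := Finset.card_pos.mpr (hne A hA); omega
        rw [split_eq_of_small h2, Finset.card_singleton, if_pos h1]
    calc 2 * π.card = ∑ _A ∈ π, 2 := by
          rw [Finset.sum_const, smul_eq_mul, mul_comm]
      _ ≤ ∑ A ∈ π, ((split A).card + if A.card = 1 then 1 else 0) :=
          Finset.sum_le_sum hper
      _ = (π.biUnion split).card + (π.filter (fun A => A.card = 1)).card := by
          rw [Finset.sum_add_distrib, hcb, hcf]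

end Aux

theorem stmt_4 {V : Type*} [Fintype V] (G : SimpleGraph V) (hconn : G.Connected)
    (r : ℕ) (hr : r = {v : V | ∀ w : V, w ≠ v → G.Adj v w}.ncard)
    (h : ∃ π : Finset (Finset V), IsIdomaticPartition G π) :
    2 * idNum G - r ≤ IC G := by
  classical
  obtain ⟨π₀, hπ₀⟩ := h
  have hbdd1 : BddAbove {k | ∃ π : Finset (Finset V), IsIdomaticPartition G π ∧ π.card = k} :=
    ⟨Fintype.card (Finset V), by rintro k ⟨π, -, rfl⟩; exact Finset.card_le_univ π⟩
  have hbdd2 : BddAbove {k | ∃ π : Finset (Finset V), IsICPartition G π ∧ π.card = k} :=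
    ⟨Fintype.card (Finset V), by rintro k ⟨π, -, rfl⟩; exact Finset.card_le_univ π⟩
  have hmem : idNum G ∈ {k | ∃ π : Finset (Finset V), IsIdomaticPartition G π ∧ π.card = k} :=
    Nat.sSup_mem ⟨π₀.card, π₀, hπ₀, rfl⟩ hbdd1
  obtain ⟨π, hπ, hcard⟩ := hmem
  obtain ⟨π', hic, hcount⟩ := key G hπ
  have hIC : π'.card ≤ IC G := le_csSup hbdd2 ⟨π', hic, rfl⟩
  have hsr : (π.filter (fun A => A.card = 1)).card ≤ r := by
    rw [hr]
    cases isEmpty_or_nonempty V with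
    | inl hV =>
      have hπe : π = ∅ := Finset.eq_empty_of_forall_notMem fun A hA =>
        ((hπ.1.1 A hA).elim fun x _ => hV.false x)
      subst hπe; simp
    | inr hV =>
      rw [Set.ncard_eq_toFinset_card']
      refine Finset.card_le_card_of_injOn
        (fun A => if h : A.Nonempty then h.choose else Classical.arbitrary V) ?_ ?_
      · intro A hA
        rw [Finset.mem_coe, Finset.mem_filter] at hA
        obtain ⟨hAπ, hA1⟩ := hA
        have hAne : A.Nonempty := Finset.card_pos.mp (by omega)
        simp only [dif_pos hAne]
        have haA : hAne.choose ∈ A := hAne.choose_spec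
        rw [Finset.mem_coe, Set.mem_toFinset]
        intro w hw
        rcases (hπ.2 A hAπ).2 w with hwA | ⟨u, huA, hadj⟩
        · exact absurd (Finset.card_le_one.mp (by omega) w hwA hAne.choose haA) hw
        · have : u = hAne.choose := Finset.card_le_one.mp (by omega) u huA hAne.choose haA
          exact this ▸ hadj
      · intro A hA B hB hAB
        rw [Finset.coe_filter, Set.mem_setOf_eq] at hA hB
        have hAne : A.Nonempty := Finset.card_pos.mp (by omega)
        have hBne : B.Nonempty := Finset.card_pos.mp (by omega)
        simp only [dif_pos hAne, dif_pos hBne] at hAB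
        exact (hπ.1.2 hAne.choose).unique ⟨hA.1, hAne.choose_spec⟩
          ⟨hB.1, hAB ▸ hBne.choose_spec⟩
  omega

end ICNL
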